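/- In the four-state two-player type space with Ω = {ω₁,ω₂,ω₃,ω₄}, partitions Π₁ = {{ω₁,ω₂},{ω₃,ω₄}}, Π₂ = {{ω₁,ω₄},{ω₂,ω₃}}, and types t₁(ω₁)=t₁(ω₂)=(1/2,1/2,0,0), t₁(ω₃)=t₁(ω₄)=(0,0,1/2,1/2), t₂(ω₁)=t₂(ω₄)=(1/2,0,0,1/2), t₂(ω₂)=t₂(ω₃)=(0,1,0,0), there exists no probability distribution p on Ω lying in the convex hull of player 1's types and simultaneously in the convex hull of player 2's types. -/

import Mathlib

open Finset

/-- Player 1's types in the four-state example. -/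
noncomputable def t1Ex : Fin 4 → Fin 4 → ℝ :=
  ![![1/2, 1/2, 0, 0], ![1/2, 1/2, 0, 0], ![0, 0, 1/2, 1/2], ![0, 0, 1/2, 1/2]]

/-- Player 2's types in the four-state example. -/
noncomputable def t2Ex : Fin 4 → Fin 4 → ℝ :=
  ![![1/2, 0, 0, 1/2], ![0, 1, 0, 0], ![0, 1, 0, 0], ![1/2, 0, 0, 1/2]]

lemma convex_eq_coords (i j : Fin 4) : Convex ℝ {q : Fin 4 → ℝ | q i = q j} := by
  intro x hx y hy a b _ _ hab
  simp only [Set.mem_setOf_eq] at *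
  simp [hx, hy]

lemma convex_zero_coord (i : Fin 4) : Convex ℝ {q : Fin 4 → ℝ | q i = 0} := by
  intro x hx y hy a b _ _ hab
  simp only [Set.mem_setOf_eq] at *
  simp [hx, hy]

/-- there is no probability distribution lying simultaneously in the convex
hull of player 1's types and in the convex hull of player 2's types. -/
theorem stmt_7 :
    ¬ ∃ p : Fin 4 → ℝ, (∀ a, 0 ≤ p a) ∧ (∑ a, p a = 1) ∧
      p ∈ convexHull ℝ (Set.range t1Ex) ∧ p ∈ convexHull ℝ (Set.range t2Ex) := by
  rintro ⟨p, _, hsum, h1, h2⟩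
  have e12 : p 0 = p 1 := by
    have := convexHull_min (s := Set.range t1Ex) (t := {q : Fin 4 → ℝ | q 0 = q 1})
      (by rintro _ ⟨i, rfl⟩; fin_cases i <;> norm_num [t1Ex]) (convex_eq_coords 0 1)
    exact this h1
  have e34 : p 2 = p 3 := by
    have := convexHull_min (s := Set.range t1Ex) (t := {q : Fin 4 → ℝ | q 2 = q 3})
      (by rintro _ ⟨i, rfl⟩; fin_cases i <;> norm_num [t1Ex, Matrix.cons_val_two, Matrix.cons_val_three, Matrix.vecHead, Matrix.vecTail]) (convex_eq_coords 2 3)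
    exact this h1
  have e14 : p 0 = p 3 := by
    have := convexHull_min (s := Set.range t2Ex) (t := {q : Fin 4 → ℝ | q 0 = q 3})
      (by rintro _ ⟨i, rfl⟩; fin_cases i <;> norm_num [t2Ex, Matrix.cons_val_two, Matrix.cons_val_three, Matrix.vecHead, Matrix.vecTail]) (convex_eq_coords 0 3)
    exact this h2
  have e3 : p 2 = 0 := by
    have := convexHull_min (s := Set.range t2Ex) (t := {q : Fin 4 → ℝ | q 2 = 0})
      (by rintro _ ⟨i, rfl⟩; fin_cases i <;> norm_num [t2Ex, Matrix.cons_val_two, Matrix.cons_val_three, Matrix.vecHead, Matrix.vecTail]) (convex_zero_coord 2)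
    exact this h2
  rw [Fin.sum_univ_four] at hsum
  have : p 3 = 0 := e34 ▸ e3
  have h0 : p 0 = 0 := by rw [e14, this]
  rw [h0, ← e12, h0, e3, this] at hsum
  norm_num at hsum
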